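/- Let H be a separable Hilbert space and J a range function on X with values in closed subspaces of H. Then J is measurable in the weak sense (x ↦ ⟨P_J(x)u, v⟩ measurable for all u,v ∈ H, where P_J(x) is the orthogonal projection onto J(x)) if and only if there exists a sequence of measurable functions φ_k : X → H, k ≥ 1, such that J(x) = closure{ φ_k(x) : k ≥ 1 } for all x ∈ X. -/

import Mathlib

open Metric Set

local notation "⟪" x ", " y "⟫" => @inner ℂ _ _ x y

/-- rational balls centered at a dense sequence form a topological basis -/
private lemma aux_ball_basis {H : Type*} [MetricSpace H] [Nonempty H]
    [TopologicalSpace.SeparableSpace H] :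
    ∃ e : ℕ → H, TopologicalSpace.IsTopologicalBasis
      {S : Set H | ∃ (n : ℕ) (q : ℚ), S = Metric.ball (e n) q} := by
  obtain ⟨e, he⟩ := TopologicalSpace.exists_dense_seq H
  refine ⟨e, TopologicalSpace.isTopologicalBasis_of_isOpen_of_nhds ?_ ?_⟩
  · rintro _ ⟨n, q, rfl⟩; exact isOpen_ball
  · intro x s hx hs
    obtain ⟨r, hr, hball⟩ := Metric.isOpen_iff.mp hs x hx
    obtain ⟨n, hn⟩ := he.exists_dist_lt x (half_pos hr)
    obtain ⟨q, hq1, hq2⟩ := exists_rat_btwn hn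
    refine ⟨Metric.ball (e n) q, ⟨n, q, rfl⟩, ?_, fun y hy => hball ?_⟩
    · rw [Metric.mem_ball]; exact hq1
    · rw [Metric.mem_ball] at hy ⊢
      calc dist y x ≤ dist y (e n) + dist (e n) x := dist_triangle _ _ _
        _ < q + q := add_lt_add hy (by rw [dist_comm]; exact hq1)
        _ < r := by linarith [hq2]

/-- a map into a second countable metric space all of whose distances to points are
measurable is measurable -/
private lemma aux_measurable_of_dist {X H : Type*} [MeasurableSpace X] [MetricSpace H]
    [Nonempty H] [MeasurableSpace H] [BorelSpace H] [SecondCountableTopology H]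
    {f : X → H} (h : ∀ c : H, Measurable fun x => dist (f x) c) : Measurable f := by
  obtain ⟨e, hB⟩ := aux_ball_basis (H := H)
  convert measurable_generateFrom _
  · exact BorelSpace.measurable_eq.trans hB.borel_eq_generateFrom
  · rintro _ ⟨n, q, rfl⟩
    exact measurableSet_lt (h (e n)) measurable_const

/-- infimum distance to the range of a sequence -/
private lemma aux_infDist_range {α : Type*} [PseudoMetricSpace α] (w : α) (f : ℕ → α) :
    Metric.infDist w (Set.range f) = ⨅ k, dist w (f k) := by
  rw [Metric.infDist, Metric.infEDist, iInf_range,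
    ENNReal.toReal_iInf (fun i => edist_ne_top _ _)]
  simp [dist_edist]

/-- a range function `J` on `X` with values in closed subspaces of a separable
Hilbert space `H` is weakly measurable (i.e. `x ↦ ⟨P_{J(x)}u, v⟩` is measurable for all
`u, v ∈ H`) if and only if there is a sequence of measurable functions `φ_k : X → H` with
`J(x) = closure {φ_k(x) : k ≥ 1}` for all `x`. -/
theorem rangeFunction_measurable_iff_selections
    {X : Type*} [MeasurableSpace X]
    {H : Type*} [NormedAddCommGroup H] [InnerProductSpace ℂ H] [CompleteSpace H]
    [MeasurableSpace H] [BorelSpace H] [SecondCountableTopology H]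
    (J : X → Submodule ℂ H) [∀ x, CompleteSpace ↥(J x)] :
    (∀ u v : H, Measurable fun x => (inner ℂ (((J x).orthogonalProjectionOnto u : H)) v : ℂ))
      ↔ ∃ φ : ℕ → X → H, (∀ k, Measurable (φ k)) ∧
          ∀ x, (J x : Set H) = closure (Set.range fun k => φ k x) := by
  -- notation for the projection
  set P : X → H → H := fun x u => ((J x).orthogonalProjectionOnto u : H) with hP
  have hperp : ∀ (x : X) (w a : H), a ∈ J x → ⟪a, w - P x w⟫ = 0 := fun x w a ha =>
    (Submodule.mem_orthogonal _ _).mp (Submodule.sub_starProjection_mem_orthogonal w) a ha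
  have hself : ∀ (x : X) (w : H), ⟪P x w, w⟫ = ⟪P x w, P x w⟫ := by
    intro x w
    have := hperp x w (P x w) ((J x).orthogonalProjectionOnto w).2
    rw [inner_sub_right, sub_eq_zero] at this
    exact this
  constructor
  · intro h
    obtain ⟨e, he⟩ := TopologicalSpace.exists_dense_seq H
    -- measurability of distances from projections
    have hdist : ∀ (u c : H), Measurable fun x => dist (P x u) c := by
      intro u c
      have hm : Measurable fun x =>
          (⟪P x u, u⟫ - ⟪P x u, c⟫ - (starRingEnd ℂ) ⟪P x u, c⟫ + ⟪c, c⟫ : ℂ) :=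
        by
          have hstar : Measurable fun x => (starRingEnd ℂ) (⟪P x u, c⟫) := by
            simp only [starRingEnd_apply]
            exact continuous_star.measurable.comp (h u c)
          exact (((h u u).sub (h u c)).sub hstar).add measurable_const
      have heq : (fun x => dist (P x u) c) = fun x =>
          Real.sqrt (Complex.re
            (⟪P x u, u⟫ - ⟪P x u, c⟫ - (starRingEnd ℂ) ⟪P x u, c⟫ + ⟪c, c⟫)) := by
        funext x
        rw [dist_eq_norm, @norm_eq_sqrt_re_inner ℂ, inner_sub_sub_self, hself x u,
          ← inner_conj_symm (P x u) c]
        rfl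
      rw [heq]
      exact (Complex.measurable_re.comp hm).sqrt
    refine ⟨fun k x => P x (e k), fun k => aux_measurable_of_dist (hdist (e k)), fun x => ?_⟩
    have hJclosed : IsClosed (J x : Set H) :=
      (completeSpace_coe_iff_isComplete.mp (inferInstance : CompleteSpace (J x))).isClosed
    apply Set.Subset.antisymm
    · -- J x ⊆ closure of the projected dense sequence
      intro u hu
      rw [Metric.mem_closure_iff]
      intro ε hε
      obtain ⟨n, hn⟩ := he.exists_dist_lt u hε
      refine ⟨P x (e n), Set.mem_range_self n, ?_⟩
      have h1 : dist u (P x (e n)) = ‖P x (u - e n)‖ := by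
        rw [dist_eq_norm]
        congr 1
        rw [hP]
        push_cast [map_sub]
        rw [show (((J x).orthogonalProjectionOnto u : H)) = u from Submodule.starProjection_eq_self_iff.mpr hu]
      rw [h1]
      calc ‖P x (u - e n)‖ = ‖(J x).orthogonalProjectionOnto (u - e n)‖ := rfl
        _ ≤ ‖u - e n‖ := by
            calc ‖(J x).orthogonalProjectionOnto (u - e n)‖
                ≤ ‖(J x).orthogonalProjectionOnto‖ * ‖u - e n‖ :=
                  ((J x).orthogonalProjectionOnto).le_opNorm _
              _ ≤ 1 * ‖u - e n‖ :=
                  mul_le_mul_of_nonneg_right (Submodule.orthogonalProjectionOnto_norm_le _) (norm_nonneg _)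
              _ = ‖u - e n‖ := one_mul _
        _ = dist u (e n) := (dist_eq_norm _ _).symm
        _ < ε := hn
    · -- the projections lie in the closed subspace
      rw [← hJclosed.closure_eq]
      apply closure_mono
      rintro _ ⟨k, rfl⟩
      exact ((J x).orthogonalProjectionOnto (e k)).2
  · rintro ⟨φ, hφ, hJ⟩
    -- distance from any point to J x is measurable
    have hdistJ : ∀ w : H, Measurable fun x => ‖w - P x w‖ := by
      intro w
      have heq : (fun x => ‖w - P x w‖) = fun x => ⨅ k, dist w (φ k x) := by
        funext x
        rw [hP]
        beta_reduce
        rw [← Submodule.starProjection_apply, Submodule.starProjection_minimal]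
        have h1 : ⨅ y : (J x), ‖w - ↑y‖ = Metric.infDist w (J x : Set H) := by
          rw [Metric.infDist_eq_iInf]
          simp only [dist_eq_norm]
          rfl
        rw [h1, hJ x, Metric.infDist_closure, aux_infDist_range]
      rw [heq]
      exact Measurable.iInf fun k => measurable_const.dist (hφ k)
    -- norm of projection is measurable
    have hnorm : ∀ w : H, Measurable fun x => ‖P x w‖ := by
      intro w
      have hpyth : ∀ x, ‖P x w‖ ^ 2 = ‖w‖ ^ 2 - ‖w - P x w‖ ^ 2 := by
        intro x
        have h0 : ⟪P x w, w - P x w⟫ = 0 := hperp x w _ ((J x).orthogonalProjectionOnto w).2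
        have : ‖w‖ ^ 2 = ‖P x w + (w - P x w)‖ ^ 2 := by rw [add_sub_cancel]
        rw [@norm_add_sq ℂ, h0] at this
        simp only [map_zero, mul_zero, add_zero] at this
        linarith
      have heq : (fun x => ‖P x w‖) = fun x =>
          Real.sqrt (‖w‖ ^ 2 - ‖w - P x w‖ ^ 2) := by
        funext x
        rw [← hpyth x, Real.sqrt_sq (norm_nonneg _)]
      rw [heq]
      exact ((measurable_const.sub ((hdistJ w).pow_const 2))).sqrt
    -- polarization
    intro u v
    have hinner : ∀ x, (inner ℂ (P x u) v : ℂ) = ⟪P x u, P x v⟫ := by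
      intro x
      have h0 : ⟪P x u, v - P x v⟫ = 0 := hperp x v _ ((J x).orthogonalProjectionOnto u).2
      rw [inner_sub_right, sub_eq_zero] at h0
      exact h0
    have hlin : ∀ (x : X) (a b : H) (c : ℂ), P x a + c • P x b = P x (a + c • b) := by
      intro x a b c
      rw [hP]
      push_cast [map_add, map_smul]
      rfl
    have heq : (fun x => (inner ℂ (P x u) v : ℂ)) = fun x =>
        (((‖P x (u + v)‖ : ℂ) ^ 2 - (‖P x (u + (-1 : ℂ) • v)‖ : ℂ) ^ 2 +
          ((‖P x (u + (-Complex.I) • v)‖ : ℂ) ^ 2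
            - (‖P x (u + Complex.I • v)‖ : ℂ) ^ 2) * Complex.I) / 4) := by
      funext x
      rw [hinner x, inner_eq_sum_norm_sq_div_four]
      simp only [show (RCLike.I : ℂ) = Complex.I from rfl]
      have e1 : P x u + P x v = P x (u + v) := by
        have := hlin x u v 1; simpa using this
      have e2 : P x u - P x v = P x (u + (-1 : ℂ) • v) := by
        have := hlin x u v (-1); simpa [sub_eq_add_neg] using this
      have e3 : P x u - Complex.I • P x v = P x (u + (-Complex.I) • v) := by
        have := hlin x u v (-Complex.I)
        simpa [sub_eq_add_neg, neg_smul] using this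
      have e4 : P x u + Complex.I • P x v = P x (u + Complex.I • v) := by
        exact hlin x u v Complex.I
      rw [e1, e2, e3, e4]
      norm_num
    rw [heq]
    have hm : ∀ w : H, Measurable fun x => ((‖P x w‖ : ℂ) ^ 2) :=
      fun w => (Complex.measurable_ofReal.comp (hnorm w)).pow_const 2
    exact ((((hm (u + v)).sub (hm _)).add (((hm _).sub (hm _)).mul_const Complex.I)).div_const 4)
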